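/- Let H : ℝ → ℝ be continuous, let c ∈ (0, 1), and suppose 2·H(y) ≤ √(1 − y²) for all y ∈ [c, 1]. Let x, y : I → ℝ be differentiable on an interval I and satisfy x'(s) = y(s) and y'(s) = (1 − y(s)²)·coth(x(s)) − 2·H(y(s))·√(1 − y(s)²), with x(s) > 0 for all s ∈ I. Then at every s ∈ I with c ≤ y(s) < 1 one has y'(s) > 0. Consequently y is strictly increasing on any subinterval of I where c ≤ y < 1, and y never decreases below c after first reaching it. -/

import Mathlib

open Real Set

/-- The real hyperbolic cotangent. -/
noncomputable def coth (t : ℝ) : ℝ := Real.cosh t / Real.sinh t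

lemma one_lt_coth {t : ℝ} (ht : 0 < t) : 1 < coth t := by
  have hs : 0 < Real.sinh t := Real.sinh_pos_iff.2 ht
  rw [coth, lt_div_iff₀ hs, one_mul]
  nlinarith [Real.sinh_lt_cosh t]

/-- Confinement property in the phase plane of rotational `H`-surfaces in `ℍ² × ℝ`:
if `2 H(y) ≤ √(1 - y²)` for `y ∈ [c, 1]`, then every orbit has `y' > 0` whenever
`c ≤ y < 1`; consequently `y` is strictly increasing on any subinterval where
`c ≤ y < 1`, and never decreases below `c` after first reaching it. -/
theorem confinement_hyperbolic
    (H : ℝ → ℝ) (hHcont : Continuous H)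
    (c : ℝ) (hc : c ∈ Ioo (0 : ℝ) 1)
    (hH : ∀ y ∈ Icc c 1, 2 * H y ≤ Real.sqrt (1 - y ^ 2))
    (I : Set ℝ) (hI : I.OrdConnected)
    (x y : ℝ → ℝ)
    (hx : ∀ s ∈ I, HasDerivAt x (y s) s)
    (hy : ∀ s ∈ I, HasDerivAt y
      ((1 - y s ^ 2) * coth (x s) - 2 * H (y s) * Real.sqrt (1 - y s ^ 2)) s)
    (hxpos : ∀ s ∈ I, 0 < x s) :
    (∀ s ∈ I, c ≤ y s → y s < 1 → 0 < deriv y s) ∧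
    (∀ s₁ ∈ I, ∀ s₂ ∈ I, s₁ < s₂ →
      (∀ s ∈ Icc s₁ s₂, c ≤ y s ∧ y s < 1) → y s₁ < y s₂) ∧
    (∀ s₁ ∈ I, ∀ s₂ ∈ I, s₁ ≤ s₂ → c ≤ y s₁ →
      (∀ s ∈ Icc s₁ s₂, y s < 1) → c ≤ y s₂) := by
  -- positivity of the derivative value
  have key : ∀ s ∈ I, c ≤ y s → y s < 1 →
      0 < (1 - y s ^ 2) * coth (x s) - 2 * H (y s) * Real.sqrt (1 - y s ^ 2) := by
    intro s hs hcy hy1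
    have hy0 : 0 < y s := lt_of_lt_of_le hc.1 hcy
    have h1 : 0 < 1 - y s ^ 2 := by nlinarith
    have hsq : Real.sqrt (1 - y s ^ 2) * Real.sqrt (1 - y s ^ 2) = 1 - y s ^ 2 :=
      Real.mul_self_sqrt h1.le
    have hHle : 2 * H (y s) ≤ Real.sqrt (1 - y s ^ 2) := hH _ ⟨hcy, hy1.le⟩
    have h2 : 2 * H (y s) * Real.sqrt (1 - y s ^ 2) ≤ 1 - y s ^ 2 := by
      calc 2 * H (y s) * Real.sqrt (1 - y s ^ 2)
          ≤ Real.sqrt (1 - y s ^ 2) * Real.sqrt (1 - y s ^ 2) :=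
            mul_le_mul_of_nonneg_right hHle (Real.sqrt_nonneg _)
        _ = 1 - y s ^ 2 := hsq
    have hcoth : 1 < coth (x s) := one_lt_coth (hxpos s hs)
    nlinarith
  have dkey : ∀ s ∈ I, c ≤ y s → y s < 1 → 0 < deriv y s := by
    intro s hs hcy hy1
    rw [(hy s hs).deriv]
    exact key s hs hcy hy1
  refine ⟨dkey, ?_, ?_⟩
  · -- strict monotonicity
    intro s₁ hs₁ s₂ hs₂ h12 hbet
    have hsub : Icc s₁ s₂ ⊆ I := hI.out hs₁ hs₂
    have := strictMonoOn_of_deriv_pos (convex_Icc s₁ s₂)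
      (fun s hs => ((hy s (hsub hs)).continuousAt).continuousWithinAt)
      (fun s hs => by
        have hs' : s ∈ Icc s₁ s₂ := interior_subset hs
        exact dkey s (hsub hs') (hbet s hs').1 (hbet s hs').2)
    exact this ⟨le_rfl, h12.le⟩ ⟨h12.le, le_rfl⟩ h12
  · -- never decreases below c
    intro s₁ hs₁ s₂ hs₂ h12 hcy₁ hlt1
    by_contra hcon
    push_neg at hcon
    have hsub : Icc s₁ s₂ ⊆ I := hI.out hs₁ hs₂
    have hycont : ContinuousOn y (Icc s₁ s₂) :=
      fun s hs => ((hy s (hsub hs)).continuousAt).continuousWithinAt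
    set A : Set ℝ := {s | s ∈ Icc s₁ s₂ ∧ c ≤ y s} with hA
    have hAne : A.Nonempty := ⟨s₁, ⟨le_rfl, h12⟩, hcy₁⟩
    have hAbdd : BddAbove A := ⟨s₂, fun s hs => hs.1.2⟩
    set t := sSup A with ht
    have hAclosed : IsClosed A := by
      have : A = Icc s₁ s₂ ∩ y ⁻¹' Ici c := by
        ext s; simp only [hA, mem_setOf_eq, mem_inter_iff, mem_preimage, mem_Ici]
      rw [this]
      exact hycont.preimage_isClosed_of_isClosed isClosed_Icc isClosed_Ici
    have htA : t ∈ A := hAclosed.csSup_mem hAne hAbdd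
    have htI : t ∈ Icc s₁ s₂ := htA.1
    have hyt : c ≤ y t := htA.2
    have hts₂ : t < s₂ := lt_of_le_of_ne htI.2 (fun h => absurd hcon (by rw [← h]; exact not_lt.2 hyt))
    -- everything after t in (t, s₂] has y < c
    have hafter : ∀ s, t < s → s ≤ s₂ → y s < c := by
      intro s hts hss₂
      by_contra h
      push_neg at h
      exact absurd (le_csSup hAbdd (⟨⟨htI.1.trans hts.le, hss₂⟩, h⟩ : s ∈ A)) (not_le.2 hts)
    -- y t = c
    have hytc : y t = c := by
      refine le_antisymm ?_ hyt
      by_contra h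
      push_neg at h
      -- continuity: y > c near t, contradicting hafter
      have hct : ContinuousAt y t := (hy t (hsub htI)).continuousAt
      have hev : ∀ᶠ s in nhdsWithin t (Ioi t), c < y s :=
        ((hct.tendsto.eventually_const_lt h).filter_mono nhdsWithin_le_nhds)
      have hev2 : ∀ᶠ s in nhdsWithin t (Ioi t), s ≤ s₂ :=
        Filter.eventually_of_mem (Ioc_mem_nhdsGT_of_mem ⟨le_rfl, hts₂⟩) (fun s hs => hs.2)
      have hbad : ∀ᶠ s in nhdsWithin t (Ioi t), False := by
        filter_upwards [hev, hev2, self_mem_nhdsWithin] with s h1 h2 (h3 : t < s)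
        exact absurd (hafter s h3 h2) (not_lt.2 h1.le)
      exact (hbad.exists.elim (fun _ h => h)).elim
    -- derivative at t is positive, so y increases just after t, contradiction
    have htI' : t ∈ I := hsub htI
    have hd : 0 < (1 - y t ^ 2) * coth (x t) - 2 * H (y t) * Real.sqrt (1 - y t ^ 2) :=
      key t htI' hyt (hlt1 t htI)
    have hslope := (hasDerivAt_iff_tendsto_slope.1 (hy t htI'))
    have hev : ∀ᶠ s in nhdsWithin t {t}ᶜ, 0 < slope y t s :=
      hslope.eventually (eventually_gt_nhds hd) |>.mono (fun _ h => h)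
    have hev' : ∀ᶠ s in nhdsWithin t (Ioi t), 0 < slope y t s :=
      hev.filter_mono (nhdsWithin_mono t (fun s hs => ne_of_gt hs))
    have hev2 : ∀ᶠ s in nhdsWithin t (Ioi t), s ≤ s₂ := by
      have : Ioc t s₂ ∈ nhdsWithin t (Ioi t) := Ioc_mem_nhdsGT_of_mem ⟨le_rfl, hts₂⟩
      exact Filter.eventually_of_mem this (fun s hs => hs.2)
    have : ∀ᶠ s in nhdsWithin t (Ioi t), False := by
      filter_upwards [hev', hev2, self_mem_nhdsWithin] with s hsl hss₂ (hts : t < s)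
      have : 0 < y s - y t := by
        have := mul_pos hsl (sub_pos.2 hts)
        rwa [slope_def_field, div_mul_cancel₀ _ (ne_of_gt (sub_pos.2 hts))] at this
      have : c < y s := by rw [hytc] at this; linarith
      exact absurd (hafter s hts hss₂) (not_lt.2 this.le)
    exact this.exists.elim (fun _ h => h) |>.elim
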